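/- For all r > 0 and θ ∈ ℝ one has the complex-potential identity conj(W(r,θ)) = iA · exp( (iA − 1)(ln r + iθ) ) · Σ_{k=0}^{M−1} g_k · e^{A θ_k} · e^{2π J(r,θ,k) A} / (1 − e^{2πA}). In other words, writing z = r e^{iθ}, the conjugate profile equals iA·D(r,θ)·z^{iA−1} where D(r,θ) := Σ_k g_k e^{A(θ_k + 2πJ(r,θ,k))}/(1−e^{2πA}). -/

import Mathlib

/-- The complex constant `A := −2ai/(a+i)`. -/
noncomputable def Aconst (a : ℝ) : ℂ := -2 * (a : ℂ) * Complex.I / ((a : ℂ) + Complex.I)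

/-- The self-similar velocity profile
`W(r,θ) := e^{iθ} Σ_{k} (2a g_k/(r(a−i))) · conj( exp((2a/(a+i)) ln r) · e^{A(θ_k−θ)} ·
e^{2πJ(r,θ,k)A}/(1−e^{2πA}) )`, where `J` is the winding-number function. -/
noncomputable def Wprof (a : ℝ) (M : ℕ) (g θs : Fin M → ℝ)
    (J : ℝ → ℝ → Fin M → ℤ) (r θ : ℝ) : ℂ :=
  Complex.exp (Complex.I * (θ : ℂ)) * ∑ k : Fin M,
    (2 * (a : ℂ) * (g k : ℂ) / ((r : ℂ) * ((a : ℂ) - Complex.I))) *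
      (starRingEnd ℂ)
        (Complex.exp ((2 * (a : ℂ) / ((a : ℂ) + Complex.I)) * (Real.log r : ℂ)) *
          Complex.exp (Aconst a * ((θs k : ℂ) - (θ : ℂ))) *
          (Complex.exp (2 * (Real.pi : ℂ) * (J r θ k : ℂ) * Aconst a) /
            (1 - Complex.exp (2 * (Real.pi : ℂ) * Aconst a))))

lemma Aconst_exp_ne_one (a : ℝ) (ha : 0 < a) :
    Complex.exp (2 * (Real.pi:ℂ) * Aconst a) ≠ 1 := by
  have hre : (Aconst a).re = -2*a/(a^2+1) := by
    simp [Aconst, Complex.div_re, Complex.normSq_apply]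
    ring
  intro h
  have habs := congrArg (‖·‖) h
  rw [Complex.norm_exp] at habs
  simp [hre] at habs
  rcases habs with h0 | h0 <;> nlinarith [sq_nonneg a]

lemma Wprof_term (a : ℝ) (ha : 0 < a) (r θ θk gk : ℝ) (j : ℤ) (hr : 0 < r) :
    Complex.exp (-(Complex.I * (θ:ℂ))) *
      ((2 * (a:ℂ) * (gk:ℂ) / ((r:ℂ) * ((a:ℂ) + Complex.I))) *
        (Complex.exp ((2 * (a:ℂ) / ((a:ℂ) + Complex.I)) * (Real.log r : ℂ)) *
          Complex.exp (Aconst a * ((θk:ℂ) - (θ:ℂ))) *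
          (Complex.exp (2 * (Real.pi:ℂ) * (j:ℂ) * Aconst a) /
            (1 - Complex.exp (2 * (Real.pi:ℂ) * Aconst a))))) =
    Complex.I * Aconst a *
      Complex.exp ((Complex.I * Aconst a - 1) * ((Real.log r : ℂ) + Complex.I * (θ:ℂ))) *
      ((gk:ℂ) * Complex.exp (Aconst a * (θk:ℂ)) *
        Complex.exp (2 * (Real.pi:ℂ) * (j:ℂ) * Aconst a) /
        (1 - Complex.exp (2 * (Real.pi:ℂ) * Aconst a))) := by
  have haI : (a:ℂ) + Complex.I ≠ 0 := by
    intro h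
    have := congrArg Complex.im h
    simp at this
  have hr0 : (r:ℂ) ≠ 0 := by exact_mod_cast hr.ne'
  have hden : 1 - Complex.exp (2 * (Real.pi:ℂ) * Aconst a) ≠ 0 := by
    intro h
    apply Aconst_exp_ne_one a ha
    linear_combination -h
  have hIB : Complex.I * Aconst a = 2 * (a:ℂ) / ((a:ℂ) + Complex.I) := by
    rw [Aconst]
    field_simp
    linear_combination (-(a:ℂ)) * Complex.I_sq
  have harg : (Complex.I * Aconst a - 1) * ((Real.log r : ℂ) + Complex.I * (θ:ℂ)) =
      Complex.I * Aconst a * (Real.log r : ℂ) + (-(Aconst a * (θ:ℂ))) +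
        (-(Complex.I * (θ:ℂ))) + (-(Real.log r : ℂ)) := by
    linear_combination (Aconst a * (θ:ℂ)) * Complex.I_sq
  have hexpL : Complex.exp ((Real.log r : ℂ)) = (r:ℂ) := by
    rw [← Complex.ofReal_exp, Real.exp_log hr]
  rw [harg, Complex.exp_add, Complex.exp_add, Complex.exp_add, Complex.exp_neg,
    Complex.exp_neg, Complex.exp_neg, hexpL, hIB,
    show Aconst a * ((θk:ℂ) - (θ:ℂ)) = Aconst a * (θk:ℂ) - Aconst a * (θ:ℂ) from by ring,
    Complex.exp_sub]
  simp only [div_eq_mul_inv, mul_inv]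
  ring

/-- For all `r > 0` and `θ ∈ ℝ`,
`conj(W(r,θ)) = iA · exp((iA−1)(ln r + iθ)) · Σ_k g_k e^{Aθ_k} e^{2πJ(r,θ,k)A}/(1−e^{2πA})`,
i.e. writing `z = re^{iθ}`, the conjugate profile equals `iA·D(r,θ)·z^{iA−1}`. -/
theorem Wprof_complex_potential (a : ℝ) (ha : 0 < a) (M : ℕ) (hM : 1 ≤ M)
    (g θs : Fin M → ℝ) (J : ℝ → ℝ → Fin M → ℤ)
    (hJ : ∀ (r θ : ℝ) (k : Fin M), 0 < r →
      IsLeast {j : ℤ | 0 < a * (2 * Real.pi * (j : ℝ) + θs k - θ) + Real.log r} (J r θ k))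
    (r θ : ℝ) (hr : 0 < r) :
    (starRingEnd ℂ) (Wprof a M g θs J r θ) =
      Complex.I * Aconst a *
        Complex.exp ((Complex.I * Aconst a - 1) * ((Real.log r : ℂ) + Complex.I * (θ : ℂ))) *
        ∑ k : Fin M, (g k : ℂ) * Complex.exp (Aconst a * (θs k : ℂ)) *
          Complex.exp (2 * (Real.pi : ℂ) * (J r θ k : ℂ) * Aconst a) /
          (1 - Complex.exp (2 * (Real.pi : ℂ) * Aconst a)) := by
  rw [Wprof, map_mul, map_sum, Finset.mul_sum]
  have h1 : (starRingEnd ℂ) (Complex.exp (Complex.I * (θ:ℂ))) =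
      Complex.exp (-(Complex.I * (θ:ℂ))) := by
    rw [← Complex.exp_conj, map_mul, Complex.conj_I, Complex.conj_ofReal, neg_mul]
  rw [h1, Finset.mul_sum]
  refine Finset.sum_congr rfl fun k _ => ?_
  rw [map_mul, Complex.conj_conj]
  have h2 : (starRingEnd ℂ) (2 * (a:ℂ) * (g k : ℂ) / ((r:ℂ) * ((a:ℂ) - Complex.I))) =
      2 * (a:ℂ) * (g k : ℂ) / ((r:ℂ) * ((a:ℂ) + Complex.I)) := by
    rw [map_div₀]
    simp [Complex.conj_ofReal, map_ofNat]
  rw [h2, Wprof_term a ha r θ (θs k) (g k) (J r θ k) hr]
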